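/- Let K be a perfect field and M/K a finite Galois extension inside an algebraic closure K̄. Then M/K is obtained by nontrivial strong cluster magnification from some subextension L/K if and only if Gal(M/K) is isomorphic to a direct product A × B of nontrivial groups A and B with |A| > 2. Moreover, when this happens, the subextension L/K is itself Galois over K. -/

import Mathlib

set_option maxHeartbeats 1000000
set_option synthInstance.maxHeartbeats 400000


/-- The Galois closure inside the algebraic closure of a finite extension `M/K`. -/
noncomputable def galoisClosure (K : Type*) [Field K]
    (M : IntermediateField K (AlgebraicClosure K)) : IntermediateField K (AlgebraicClosure K) :=
  IntermediateField.normalClosure K ↥M (AlgebraicClosure K)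

/-- `M/K` is obtained by strong cluster magnification from the subextension `L/K` through the
finite Galois extension `F/K`: `[L:K] > 2`, the Galois closure `L̃` of `L` and `F` are
linearly disjoint over `K` (equivalently `L̃ ∩ F = K`, since `F/K` is Galois), and `LF = M`. -/
def IsStrongClusterMagnification (K : Type*) [Field K]
    (L F M : IntermediateField K (AlgebraicClosure K)) : Prop :=
  2 < Module.finrank K ↥L ∧ FiniteDimensional K ↥F ∧ IsGalois K ↥F ∧
    galoisClosure K L ⊓ F = ⊥ ∧ L ⊔ F = M

open IntermediateField Module

section GroupAux

variable {G : Type*} [Group G]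

/-- If `H̃ ≤ H`, `H̃` is normal, `H ⊓ N = ⊥` and `H̃ ⊔ N = ⊤`, then `H ≤ H̃`. -/
theorem scm_le_of_core {H N Ht : Subgroup G} (hle : Ht ≤ H) (hnorm : Ht.Normal)
    (hinf : H ⊓ N = ⊥) (hsup : Ht ⊔ N = ⊤) : H ≤ Ht := by
  intro h hh
  have hmem : h ∈ ((Ht ⊔ N : Subgroup G) : Set G) := hsup ▸ Subgroup.mem_top h
  rw [Subgroup.normal_mul] at hmem
  obtain ⟨x, hx, n, hn, hxn⟩ := hmem
  have hxn' : x * n = h := hxn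
  have hnH : n ∈ H ⊓ N := by
    refine ⟨?_, hn⟩
    have : n = x⁻¹ * h := by rw [← hxn']; group
    rw [this]
    exact H.mul_mem (H.inv_mem (hle hx)) hh
  have hn1 : n = 1 := by rwa [hinf, Subgroup.mem_bot] at hnH
  rw [← hxn', hn1, mul_one]
  exact hx

/-- Internal direct product: two normal subgroups that are disjoint and codisjoint give a
direct product decomposition. -/
noncomputable def scmProdIso (A B : Subgroup G) (hA : A.Normal) (hB : B.Normal)
    (hinf : A ⊓ B = ⊥) (hsup : A ⊔ B = ⊤) : G ≃* ↥A × ↥B := by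
  have comm : ∀ (a : ↥A) (b : ↥B), Commute (A.subtype a) (B.subtype b) := fun a b =>
    Subgroup.commute_of_normal_of_disjoint A B hA hB (disjoint_iff.mpr hinf) a b a.2 b.2
  let f := A.subtype.noncommCoprod B.subtype comm
  have hinj : Function.Injective f := by
    rw [injective_iff_map_eq_one]
    rintro ⟨a, b⟩ hab
    have hab' : (a : G) * (b : G) = 1 := hab
    have ha : (a : G) ∈ A ⊓ B := by
      refine ⟨a.2, ?_⟩
      have : (a : G) = (b : G)⁻¹ := eq_inv_of_mul_eq_one_left hab'
      rw [this]; exact B.inv_mem b.2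
    have ha1 : (a : G) = 1 := by rwa [hinf, Subgroup.mem_bot] at ha
    have hb1 : (b : G) = 1 := by rwa [ha1, one_mul] at hab'
    exact Prod.ext (Subtype.ext ha1) (Subtype.ext hb1)
  have hsurj : Function.Surjective f := by
    intro g
    have hmem : g ∈ ((A ⊔ B : Subgroup G) : Set G) := hsup ▸ Subgroup.mem_top g
    rw [Subgroup.normal_mul] at hmem
    obtain ⟨x, hx, y, hy, hxy⟩ := hmem
    exact ⟨(⟨x, hx⟩, ⟨y, hy⟩), hxy⟩  -- might need defeq massage
  exact (MulEquiv.ofBijective f ⟨hinj, hsurj⟩).symm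

end GroupAux

section GaloisAux

variable {K M : Type*} [Field K] [Field M] [Algebra K M]

theorem scm_gc : GaloisConnection
    (fun E : IntermediateField K M => OrderDual.toDual (fixingSubgroup E))
    (fun H : (Subgroup (M ≃ₐ[K] M))ᵒᵈ => fixedField (OrderDual.ofDual H)) :=
  fun E H => (IntermediateField.le_iff_le (OrderDual.ofDual H) E).symm

theorem scm_fixingSubgroup_sup (E1 E2 : IntermediateField K M) :
    fixingSubgroup (E1 ⊔ E2) = fixingSubgroup E1 ⊓ fixingSubgroup E2 :=
  congrArg OrderDual.ofDual (scm_gc.l_sup (a₁ := E1) (a₂ := E2))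

theorem scm_fixedField_sup (H1 H2 : Subgroup (M ≃ₐ[K] M)) :
    fixedField (H1 ⊔ H2) = fixedField H1 ⊓ fixedField H2 :=
  scm_gc.u_inf (b₁ := OrderDual.toDual H1) (b₂ := OrderDual.toDual H2)

variable [FiniteDimensional K M]

theorem scm_fixingSubgroup_inf [IsGalois K M] (E1 E2 : IntermediateField K M) :
    fixingSubgroup (E1 ⊓ E2) = fixingSubgroup E1 ⊔ fixingSubgroup E2 := by
  have h := scm_fixedField_sup (fixingSubgroup E1) (fixingSubgroup E2)
  rw [IsGalois.fixedField_fixingSubgroup, IsGalois.fixedField_fixingSubgroup] at h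
  rw [← h]
  exact fixingSubgroup_fixedField _

theorem scm_fixedField_inf [IsGalois K M] (H1 H2 : Subgroup (M ≃ₐ[K] M)) :
    fixedField (H1 ⊓ H2) = fixedField H1 ⊔ fixedField H2 := by
  have h := scm_fixingSubgroup_sup (fixedField H1) (fixedField H2)
  rw [fixingSubgroup_fixedField, fixingSubgroup_fixedField] at h
  rw [← h, IsGalois.fixedField_fixingSubgroup]

theorem scm_fixedField_bot [IsGalois K M] :
    fixedField (⊥ : Subgroup (M ≃ₐ[K] M)) = ⊤ := by
  rw [← IntermediateField.fixingSubgroup_top (F := K) (E := M)]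
  exact IsGalois.fixedField_fixingSubgroup ⊤

theorem scm_fixedField_top [IsGalois K M] :
    fixedField (⊤ : Subgroup (M ≃ₐ[K] M)) = ⊥ := by
  rw [← IntermediateField.fixingSubgroup_bot (F := K) (E := M)]
  exact IsGalois.fixedField_fixingSubgroup ⊥

end GaloisAux

section LiftAux

variable {K Ω : Type*} [Field K] [Field Ω] [Algebra K Ω] {M : IntermediateField K Ω}

theorem scm_lift_fieldRange {E : IntermediateField K Ω} (h : E ≤ M) :
    lift (IntermediateField.inclusion h).fieldRange = E := by
  rw [IntermediateField.lift, AlgHom.fieldRange_eq_map, IntermediateField.map_map]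
  have heq : M.val.comp (IntermediateField.inclusion h) = E.val := by ext x; rfl
  rw [heq, ← AlgHom.fieldRange_eq_map, fieldRange_val]

theorem scm_lift_le_lift {E1 E2 : IntermediateField K ↥M} (h : lift E1 ≤ lift E2) : E1 ≤ E2 :=
  fun x hx => (mem_lift x).mp (h ((mem_lift x).mpr hx))

theorem scm_lift_sup (E1 E2 : IntermediateField K ↥M) :
    lift (E1 ⊔ E2) = lift E1 ⊔ lift E2 :=
  IntermediateField.map_sup E1 E2 M.val

theorem scm_lift_inf (E1 E2 : IntermediateField K ↥M) :
    lift (E1 ⊓ E2) = lift E1 ⊓ lift E2 :=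
  IntermediateField.map_inf E1 E2 M.val

end LiftAux

section MainAux

variable (K : Type*) [Field K] [PerfectField K]
variable (M : IntermediateField K (AlgebraicClosure K))
variable [FiniteDimensional K ↥M] [IsGalois K ↥M]

/-- Part 2: the subextension in a strong cluster magnification of a Galois extension is Galois. -/
theorem scm_galois_of_magnification (L F : IntermediateField K (AlgebraicClosure K))
    (hLM : L ≤ M) (h : IsStrongClusterMagnification K L F M) : IsGalois K ↥L := by
  obtain ⟨h2, hFfin, hFgal, hdisj, hsup⟩ := h
  have hFM : F ≤ M := le_sup_right.trans hsup.le
  haveI : FiniteDimensional K ↥L :=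
    FiniteDimensional.of_injective (IntermediateField.inclusion hLM).toLinearMap
      (IntermediateField.inclusion hLM).injective
  have hLT : L ≤ galoisClosure K L := IntermediateField.le_normalClosure L
  haveI : Normal K ↥(galoisClosure K L) := normalClosure.normal K ↥L _
  have hTM : galoisClosure K L ≤ M :=
    IntermediateField.normalClosure_le_iff_of_normal.mpr hLM
  -- move to intermediate fields of M
  set L₀ : IntermediateField K ↥M := (IntermediateField.inclusion hLM).fieldRange with hL₀
  set F₀ : IntermediateField K ↥M := (IntermediateField.inclusion hFM).fieldRange with hF₀
  set T₀ : IntermediateField K ↥M := (IntermediateField.inclusion hTM).fieldRange with hT₀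
  have hliftL : lift L₀ = L := scm_lift_fieldRange hLM
  have hliftF : lift F₀ = F := scm_lift_fieldRange hFM
  have hliftT : lift T₀ = galoisClosure K L := scm_lift_fieldRange hTM
  have hLT₀ : L₀ ≤ T₀ := scm_lift_le_lift (by rw [hliftL, hliftT]; exact hLT)
  -- normality of T₀
  haveI hTnorm : Normal K ↥T₀ := by
    have h1 : Normal K ↥(lift T₀) := by rw [hliftT]; infer_instance
    exact (IntermediateField.liftAlgEquiv T₀).transfer_normal.mpr h1
  -- the three subgroups
  have hHtH : fixingSubgroup T₀ ≤ fixingSubgroup L₀ :=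
    IntermediateField.fixingSubgroup_antitone hLT₀
  have hHtnorm : (fixingSubgroup T₀).Normal := by
    have h1 : (AlgEquiv.restrictNormalHom (F := K) (K₁ := ↥M) ↥T₀).ker.Normal := MonoidHom.normal_ker _
    rwa [IntermediateField.restrictNormalHom_ker T₀] at h1
  have hsup₀ : L₀ ⊔ F₀ = ⊤ := by
    apply lift_injective
    rw [scm_lift_sup, hliftL, hliftF, hsup, lift_top]
  have hinf₀ : T₀ ⊓ F₀ = ⊥ := by
    apply lift_injective
    rw [scm_lift_inf, hliftT, hliftF, hdisj, lift_bot]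
  have hHN : fixingSubgroup L₀ ⊓ fixingSubgroup F₀ = ⊥ := by
    rw [← scm_fixingSubgroup_sup, hsup₀, IntermediateField.fixingSubgroup_top]
  have hHtN : fixingSubgroup T₀ ⊔ fixingSubgroup F₀ = ⊤ := by
    rw [← scm_fixingSubgroup_inf, hinf₀, IntermediateField.fixingSubgroup_bot]
  have hle : fixingSubgroup L₀ ≤ fixingSubgroup T₀ := scm_le_of_core hHtH hHtnorm hHN hHtN
  have hfixeq : fixingSubgroup L₀ = fixingSubgroup T₀ := le_antisymm hle hHtH
  have hfield : L₀ = T₀ := by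
    rw [← IsGalois.fixedField_fixingSubgroup L₀, ← IsGalois.fixedField_fixingSubgroup T₀, hfixeq]
  have hLeq : L = galoisClosure K L := by
    rw [← hliftT, ← hfield]; exact hliftL.symm
  rw [hLeq]
  exact { }

end MainAux

theorem stmt_7 (K : Type*) [Field K] [PerfectField K]
    (M : IntermediateField K (AlgebraicClosure K)) [FiniteDimensional K ↥M] [IsGalois K ↥M] :
    ((∃ L F : IntermediateField K (AlgebraicClosure K),
        L ≤ M ∧ IsStrongClusterMagnification K L F M ∧ F ≠ ⊥) ↔
      (∃ A B : Subgroup (↥M ≃ₐ[K] ↥M),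
        Nontrivial ↥A ∧ Nontrivial ↥B ∧ 2 < Nat.card ↥A ∧
          Nonempty ((↥M ≃ₐ[K] ↥M) ≃* ↥A × ↥B))) ∧
    (∀ L F : IntermediateField K (AlgebraicClosure K),
        L ≤ M → IsStrongClusterMagnification K L F M → F ≠ ⊥ → IsGalois K ↥L) := by
  classical
  constructor
  · constructor
    · -- forward
      rintro ⟨L, F, hLM, hmag, hFne⟩
      haveI hLgal : IsGalois K ↥L := scm_galois_of_magnification K M L F hLM hmag
      obtain ⟨h2, hFfin, hFgal, hdisj, hsup⟩ := hmag
      have hFM : F ≤ M := le_sup_right.trans hsup.le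
      set L₀ : IntermediateField K ↥M := (IntermediateField.inclusion hLM).fieldRange with hL₀
      set F₀ : IntermediateField K ↥M := (IntermediateField.inclusion hFM).fieldRange with hF₀
      have hliftL : lift L₀ = L := scm_lift_fieldRange hLM
      have hliftF : lift F₀ = F := scm_lift_fieldRange hFM
      haveI hL₀gal : IsGalois K ↥L₀ := by
        have h1 : IsGalois K ↥(lift L₀) := by rw [hliftL]; infer_instance
        exact (IntermediateField.liftAlgEquiv L₀).transfer_galois.mpr h1
      haveI hF₀gal : IsGalois K ↥F₀ := by
        have h1 : IsGalois K ↥(lift F₀) := by rw [hliftF]; exact hFgal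
        exact (IntermediateField.liftAlgEquiv F₀).transfer_galois.mpr h1
      set A : Subgroup (↥M ≃ₐ[K] ↥M) := fixingSubgroup F₀ with hA
      set B : Subgroup (↥M ≃ₐ[K] ↥M) := fixingSubgroup L₀ with hB
      have hAnorm : A.Normal := by
        have h1 : (AlgEquiv.restrictNormalHom (F := K) (K₁ := ↥M) ↥F₀).ker.Normal := MonoidHom.normal_ker _
        rwa [IntermediateField.restrictNormalHom_ker F₀] at h1
      have hBnorm : B.Normal := by
        have h1 : (AlgEquiv.restrictNormalHom (F := K) (K₁ := ↥M) ↥L₀).ker.Normal := MonoidHom.normal_ker _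
        rwa [IntermediateField.restrictNormalHom_ker L₀] at h1
      have hsup₀ : L₀ ⊔ F₀ = ⊤ := by
        apply lift_injective
        rw [scm_lift_sup, hliftL, hliftF, hsup, lift_top]
      have hinf₀ : L₀ ⊓ F₀ = ⊥ := by
        apply lift_injective
        rw [scm_lift_inf, hliftL, hliftF, lift_bot]
        have hLT : L ≤ galoisClosure K L := IntermediateField.le_normalClosure L
        rw [← le_bot_iff, ← hdisj]
        exact inf_le_inf_right F hLT
      have hABinf : A ⊓ B = ⊥ := by
        rw [hA, hB, ← scm_fixingSubgroup_sup, sup_comm, hsup₀,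
          IntermediateField.fixingSubgroup_top]
      have hABsup : A ⊔ B = ⊤ := by
        rw [hA, hB, ← scm_fixingSubgroup_inf, inf_comm, hinf₀,
          IntermediateField.fixingSubgroup_bot]
      have e : (↥M ≃ₐ[K] ↥M) ≃* ↥A × ↥B := scmProdIso A B hAnorm hBnorm hABinf hABsup
      -- cardinalities
      have hcardG : Nat.card (↥M ≃ₐ[K] ↥M) = Nat.card ↥A * Nat.card ↥B := by
        rw [Nat.card_congr e.toEquiv, Nat.card_prod]
      have hGfr : Nat.card (↥M ≃ₐ[K] ↥M) = finrank K ↥M := by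
        rw [IsGalois.card_aut_eq_finrank]
      have hBfr : Nat.card ↥B = finrank ↥L₀ ↥M := by
        have h1 : finrank ↥(fixedField B) ↥M = Nat.card ↥B :=
          IntermediateField.finrank_fixedField_eq_card B
        rw [hB, IsGalois.fixedField_fixingSubgroup] at h1
        rw [← h1]
      have htower : finrank K ↥L₀ * finrank ↥L₀ ↥M = finrank K ↥M :=
        Module.finrank_mul_finrank K ↥L₀ ↥M
      have hfrL : finrank K ↥L₀ = finrank K ↥L := by
        have h1 := (IntermediateField.liftAlgEquiv L₀).toLinearEquiv.finrank_eq
        rw [hliftL] at h1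
        exact h1
      have hBpos : 0 < Nat.card ↥B := Nat.card_pos
      have hcardA : Nat.card ↥A = finrank K ↥L := by
        have h1 : Nat.card ↥A * Nat.card ↥B = finrank K ↥L * Nat.card ↥B := by
          rw [← hcardG, hGfr, ← htower, hfrL, hBfr]
        exact Nat.eq_of_mul_eq_mul_right hBpos h1
      have h2A : 2 < Nat.card ↥A := hcardA ▸ (hfrL ▸ h2)
      have hAnt : Nontrivial ↥A := by
        rw [← Finite.one_lt_card_iff_nontrivial]
        omega
      have hBnt : Nontrivial ↥B := by
        rw [Subgroup.nontrivial_iff_ne_bot]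
        intro hBbot
        have hL₀top : L₀ = ⊤ := by
          rw [← IsGalois.fixedField_fixingSubgroup L₀, ← hB, hBbot, scm_fixedField_bot]
        have hLM' : L = M := by rw [← hliftL, hL₀top, lift_top]
        have hFL : F ≤ galoisClosure K L :=
          (hFM.trans hLM'.ge).trans (IntermediateField.le_normalClosure L)
        have : F ≤ ⊥ := by rw [← hdisj]; exact le_inf hFL le_rfl
        exact hFne (le_bot_iff.mp this)
      exact ⟨A, B, hAnt, hBnt, h2A, ⟨e⟩⟩
    · -- backward
      rintro ⟨A, B, hAnt, hBnt, h2A, ⟨e⟩⟩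
      set G := ↥M ≃ₐ[K] ↥M
      set A' : Subgroup G := ((MonoidHom.snd ↥A ↥B).comp e.toMonoidHom).ker with hA'
      set B' : Subgroup G := ((MonoidHom.fst ↥A ↥B).comp e.toMonoidHom).ker with hB'
      haveI hA'norm : A'.Normal := MonoidHom.normal_ker _
      haveI hB'norm : B'.Normal := MonoidHom.normal_ker _
      -- equivalences with A and B
      have eA : ↥A' ≃ ↥A :=
        { toFun := fun x => (e x.1).1
          invFun := fun a => ⟨e.symm (a, 1), by
            simp [hA', MonoidHom.mem_ker, Subgroup.mem_prod]⟩
          left_inv := fun x => by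
            have hx : (e x.1).2 = 1 := x.2
            apply Subtype.ext
            have : ((e x.1).1, (1 : ↥B)) = e x.1 := by
              rw [← hx]
            simp only [this, MulEquiv.symm_apply_apply]
          right_inv := fun a => by simp }
      have eB : ↥B' ≃ ↥B :=
        { toFun := fun x => (e x.1).2
          invFun := fun b => ⟨e.symm (1, b), by
            simp [hB', MonoidHom.mem_ker, Subgroup.mem_prod]⟩
          left_inv := fun x => by
            have hx : (e x.1).1 = 1 := x.2
            apply Subtype.ext
            have : ((1 : ↥A), (e x.1).2) = e x.1 := by
              rw [← hx]
            simp only [this, MulEquiv.symm_apply_apply]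
          right_inv := fun b => by simp }
      have hcardA' : Nat.card ↥A' = Nat.card ↥A := Nat.card_congr eA
      have hcardB' : Nat.card ↥B' = Nat.card ↥B := Nat.card_congr eB
      have hA'B'inf : A' ⊓ B' = ⊥ := by
        ext x
        simp only [Subgroup.mem_inf, Subgroup.mem_bot, hA', hB', MonoidHom.mem_ker,
          MonoidHom.comp_apply, MonoidHom.coe_snd, MonoidHom.coe_fst, MulEquiv.coe_toMonoidHom]
        constructor
        · rintro ⟨h1, h2⟩
          have : e x = 1 := Prod.ext h2 h1
          have := congrArg e.symm this
          simpa using this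
        · rintro rfl; simp
      have hA'B'sup : A' ⊔ B' = ⊤ := by
        rw [eq_top_iff]
        intro g _
        have hg : g = e.symm ((e g).1, 1) * e.symm (1, (e g).2) := by
          rw [← map_mul]
          simp [Prod.mk_mul_mk]
        rw [hg]
        refine Subgroup.mul_mem_sup ?_ ?_
        · simp [hA', MonoidHom.mem_ker, Subgroup.mem_prod]
        · simp [hB', MonoidHom.mem_ker, Subgroup.mem_prod]
      -- the fields
      set L₀ : IntermediateField K ↥M := fixedField B' with hL₀
      set F₀ : IntermediateField K ↥M := fixedField A' with hF₀
      haveI hL₀gal : IsGalois K ↥L₀ := IsGalois.of_fixedField_normal_subgroup B'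
      haveI hF₀gal : IsGalois K ↥F₀ := IsGalois.of_fixedField_normal_subgroup A'
      have hfixL₀ : fixingSubgroup L₀ = B' := fixingSubgroup_fixedField B'
      have hfixF₀ : fixingSubgroup F₀ = A' := fixingSubgroup_fixedField A'
      set L : IntermediateField K (AlgebraicClosure K) := lift L₀ with hL
      set F : IntermediateField K (AlgebraicClosure K) := lift F₀ with hF
      have hLM : L ≤ M := lift_le L₀
      have hFM : F ≤ M := lift_le F₀
      haveI hLgal : IsGalois K ↥L :=
        (IntermediateField.liftAlgEquiv L₀).transfer_galois.mp hL₀gal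
      haveI hFgal : IsGalois K ↥F :=
        (IntermediateField.liftAlgEquiv F₀).transfer_galois.mp hF₀gal
      -- cardinalities / finrank
      have hcardG : Nat.card G = Nat.card ↥A * Nat.card ↥B := by
        rw [Nat.card_congr e.toEquiv, Nat.card_prod]
      have hGfr : Nat.card G = finrank K ↥M := by
        rw [IsGalois.card_aut_eq_finrank]
      have hBfr : Nat.card ↥B' = finrank ↥L₀ ↥M := by
        have h1 : finrank ↥(fixedField B') ↥M = Nat.card ↥B' :=
          IntermediateField.finrank_fixedField_eq_card B'
        rw [← h1]
      have htower : finrank K ↥L₀ * finrank ↥L₀ ↥M = finrank K ↥M :=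
        Module.finrank_mul_finrank K ↥L₀ ↥M
      have hBpos : 0 < Nat.card ↥B' := Nat.card_pos
      have hfrL₀ : finrank K ↥L₀ = Nat.card ↥A := by
        have h1 : finrank K ↥L₀ * Nat.card ↥B' = Nat.card ↥A * Nat.card ↥B' := by
          rw [hBfr, htower, ← hGfr, hcardG, ← hcardB', hBfr]
        exact Nat.eq_of_mul_eq_mul_right hBpos h1
      have hfrL : finrank K ↥L = finrank K ↥L₀ :=
        ((IntermediateField.liftAlgEquiv L₀).toLinearEquiv.finrank_eq).symm
      have h2L : 2 < finrank K ↥L := by rw [hfrL, hfrL₀]; exact h2A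
      -- finite dimensionality of F
      haveI : FiniteDimensional K ↥F₀ :=
        FiniteDimensional.of_injective F₀.val.toLinearMap F₀.val.injective
      haveI hFfin : FiniteDimensional K ↥F :=
        LinearEquiv.finiteDimensional (IntermediateField.liftAlgEquiv F₀).toLinearEquiv
      -- galois closure of L is L
      haveI : Normal K ↥L := hLgal.to_normal
      have hgc : galoisClosure K L = L := IntermediateField.normalClosure_of_normal L
      -- compute inf and sup
      have hinf₀ : L₀ ⊓ F₀ = ⊥ := by
        rw [hL₀, hF₀, ← scm_fixedField_sup, sup_comm, hA'B'sup, scm_fixedField_top]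
      have hsup₀ : L₀ ⊔ F₀ = ⊤ := by
        rw [hL₀, hF₀, ← scm_fixedField_inf, inf_comm, hA'B'inf, scm_fixedField_bot]
      have hdisj : galoisClosure K L ⊓ F = ⊥ := by
        rw [hgc, hL, hF, ← scm_lift_inf, hinf₀, lift_bot]
      have hsup : L ⊔ F = M := by
        rw [hL, hF, ← scm_lift_sup, hsup₀, lift_top]
      -- F nontrivial
      have hFne : F ≠ ⊥ := by
        intro hFbot
        have hF₀bot : F₀ = ⊥ := lift_injective M (by rw [← hF, hFbot, lift_bot])
        have hA'top : A' = ⊤ := by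
          rw [← hfixF₀, hF₀bot, IntermediateField.fixingSubgroup_bot]
        have h1 : Nat.card ↥A = Nat.card G := by
          rw [← hcardA', hA'top]
          exact Nat.card_congr (Subgroup.topEquiv).toEquiv
        have h2 : 1 < Nat.card ↥B := Finite.one_lt_card_iff_nontrivial.mpr hBnt
        have h3 : 0 < Nat.card ↥A := Nat.card_pos
        rw [hcardG] at h1
        nlinarith
      exact ⟨L, F, hLM, ⟨h2L, hFfin, hFgal, hdisj, hsup⟩, hFne⟩
  · intro L F hLM hmag _
    exact scm_galois_of_magnification K M L F hLM hmag
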